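/- Let Y be a separable Banach space and X = Y* with weak-* topology, ψ an admissible weight. If for every r > 0 there exists R > 0 such that the closed ball C_r(0) ⊂ K_R = {ψ ≤ R}, then every f ∈ 𝓑^ψ(X_{w*}) is sequentially weak-* continuous on X; in particular f is continuous with respect to the norm topology on X. -/

import Mathlib

open Filter Topology

def MemCb {X : Type*} [TopologicalSpace X] (g : X → ℝ) : Prop :=
  Continuous g ∧ ∃ M : ℝ, ∀ x, |g x| ≤ M

def MemBpsi {X : Type*} [TopologicalSpace X] (ψ : X → ℝ) (f : X → ℝ) : Prop :=
  ∀ ε > (0 : ℝ), ∃ g : X → ℝ, MemCb g ∧ ∀ x, (ψ x)⁻¹ * |f x - g x| ≤ ε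

theorem memBpsi_sequentially_weakStar_continuous
    {Y : Type*} [NormedAddCommGroup Y] [NormedSpace ℝ Y] [CompleteSpace Y]
    [TopologicalSpace.SeparableSpace Y]
    (ψ : WeakDual ℝ Y → ℝ) (hpos : ∀ x, 0 < ψ x)
    (hcomp : ∀ R > (0 : ℝ), IsCompact {x : WeakDual ℝ Y | ψ x ≤ R})
    (hball : ∀ r > (0 : ℝ), ∃ R > (0 : ℝ), ∀ x : WeakDual ℝ Y,
      ‖WeakDual.toStrongDual x‖ ≤ r → ψ x ≤ R)
    (f : WeakDual ℝ Y → ℝ) (hf : MemBpsi ψ f) :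
    (∀ (u : ℕ → WeakDual ℝ Y) (x : WeakDual ℝ Y),
      Tendsto u atTop (𝓝 x) → Tendsto (fun n => f (u n)) atTop (𝓝 (f x))) ∧
    Continuous fun x : StrongDual ℝ Y => f (StrongDual.toWeakDual x) := by
  have hseq : ∀ (u : ℕ → WeakDual ℝ Y) (x : WeakDual ℝ Y),
      Tendsto u atTop (𝓝 x) → Tendsto (fun n => f (u n)) atTop (𝓝 (f x)) := by
    intro u x hux
    -- pointwise boundedness via convergence
    have hpt : ∀ y : Y, ∃ C, ∀ n, ‖WeakDual.toStrongDual (u n) y‖ ≤ C := by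
      intro y
      have h := (tendsto_iff_forall_eval_tendsto_topDualPairing.mp hux) y
      have hb : BddAbove (Set.range fun n => ‖(topDualPairing ℝ Y) (u n) y‖) :=
        (h.norm).bddAbove_range
      obtain ⟨C, hC⟩ := hb
      exact ⟨C, fun n => hC ⟨n, rfl⟩⟩
    obtain ⟨C, hC⟩ := banach_steinhaus (g := fun n => WeakDual.toStrongDual (u n)) hpt
    set r : ℝ := max C ‖WeakDual.toStrongDual x‖ + 1 with hr
    have hrpos : 0 < r := by
      have : (0:ℝ) ≤ max C ‖WeakDual.toStrongDual x‖ :=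
        le_trans (norm_nonneg _) (le_max_right _ _)
      linarith
    obtain ⟨R, hRpos, hR⟩ := hball r hrpos
    have hψu : ∀ n, ψ (u n) ≤ R := fun n =>
      hR (u n) (le_trans (hC n) (by linarith [le_max_left C ‖WeakDual.toStrongDual x‖]))
    have hψx : ψ x ≤ R :=
      hR x (by linarith [le_max_right C ‖WeakDual.toStrongDual x‖])
    rw [Metric.tendsto_atTop]
    intro ε hε
    obtain ⟨g, ⟨hgc, _⟩, hg⟩ := hf (ε / (3 * R)) (by positivity)
    have key : ∀ z : WeakDual ℝ Y, ψ z ≤ R → |f z - g z| ≤ ε / 3 := by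
      intro z hz
      have h1 := hg z
      have hψz := hpos z
      have : |f z - g z| ≤ ψ z * (ε / (3 * R)) := (inv_mul_le_iff₀ hψz).mp h1
      calc |f z - g z| ≤ ψ z * (ε / (3 * R)) := this
        _ ≤ R * (ε / (3 * R)) := by
            apply mul_le_mul_of_nonneg_right hz; positivity
        _ = ε / 3 := by field_simp
    have hgu : Tendsto (fun n => g (u n)) atTop (𝓝 (g x)) :=
      (hgc.tendsto x).comp hux
    rw [Metric.tendsto_atTop] at hgu
    obtain ⟨N, hN⟩ := hgu (ε/3) (by positivity)
    refine ⟨N, fun n hn => ?_⟩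
    have h1 := key (u n) (hψu n)
    have h2 := key x hψx
    have h3 := hN n hn
    rw [Real.dist_eq] at *
    calc |f (u n) - f x|
        = |(f (u n) - g (u n)) + (g (u n) - g x) + (g x - f x)| := by ring_nf
      _ ≤ |f (u n) - g (u n)| + |g (u n) - g x| + |g x - f x| := by
          exact (abs_add_three _ _ _)
      _ < ε/3 + ε/3 + ε/3 := by
          rw [abs_sub_comm (g x)]; linarith
      _ = ε := by ring
  refine ⟨hseq, ?_⟩
  rw [continuous_iff_seqContinuous]
  intro u x hux
  exact hseq (fun n => StrongDual.toWeakDual (u n)) (StrongDual.toWeakDual x)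
    ((NormedSpace.Dual.toWeakDual_continuous.tendsto x).comp hux)
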